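/- Let H be an ℵ₀-monoid that admits a braiding element x such that H = ⟨add(x)⟩_{ℵ₀}. If ℵ₀·x = n·x for some finite n, then H = add(x), i.e., every element of H is a summand of a finite multiple of x. -/
import Mathlib


/-- An ℵ₀-monoid: a set with 0 and a countable summation map satisfying (A1) and (A2). -/
structure AlephMonoid (H : Type*) where
  zero : H
  sum : (ℕ → H) → H
  a1 : ∀ x : ℕ → H, (∀ i, i ≠ 0 → x i = zero) → sum x = x 0
  a2 : ∀ (x : ℕ × ℕ → H) (π : ℕ × ℕ ≃ ℕ),
    sum (fun i => sum (fun j => x (i, j))) = sum (fun k => x (π.symm k))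

namespace AlephMonoid

variable {H : Type*}

/-- The induced binary addition. -/
def add (M : AlephMonoid H) (a b : H) : H :=
  M.sum (fun i => if i = 0 then a else if i = 1 then b else M.zero)

/-- ℵ₀·a : the countable sum of copies of `a`. -/
def infMul (M : AlephMonoid H) (a : H) : H := M.sum (fun _ => a)

/-- n·a : finite multiples. -/
def nsmul (M : AlephMonoid H) : ℕ → H → H
  | 0, _ => M.zero
  | n + 1, a => M.add a (M.nsmul n a)

/-- `y ∈ add(x)` : `y` is a direct summand of a finite multiple of `x`. -/
def inAdd (M : AlephMonoid H) (x y : H) : Prop :=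
  ∃ z : H, ∃ n : ℕ, 1 ≤ n ∧ M.add y z = M.nsmul n x

/-- Multiplication by a cardinal α with 0 ≤ α ≤ ℵ₀ (`none` stands for ℵ₀). -/
def cmul (M : AlephMonoid H) : Option ℕ → H → H
  | some n, a => M.nsmul n a
  | none, a => M.infMul a

/-- The finite sum `Σ_{i=a}^{b} f i`, expressed via the countable sum of a
family supported on the interval `[a, b]`. -/
def intervalSum (M : AlephMonoid H) (f : ℕ → H) (a b : ℕ) : H :=
  M.sum (fun i => if a ≤ i ∧ i ≤ b then f i else M.zero)

end AlephMonoid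

namespace AlephMonoid

variable {H : Type*} (M : AlephMonoid H)

lemma sum_const_zero : M.sum (fun _ => M.zero) = M.zero :=
  M.a1 _ (fun _ _ => rfl)

/-- The master reindexing lemma: a double sum is invariant under any
permutation of the index set ℕ × ℕ. -/
lemma dsum_reindex (y : ℕ × ℕ → H) (ρ : ℕ × ℕ ≃ ℕ × ℕ) :
    M.sum (fun i => M.sum (fun j => y (ρ (i, j)))) =
      M.sum (fun i => M.sum (fun j => y (i, j))) := by
  have π : ℕ × ℕ ≃ ℕ := Denumerable.eqv (ℕ × ℕ)
  have h1 := M.a2 (fun p => y (ρ p)) (ρ.trans π)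
  have h2 := M.a2 y π
  rw [h1, h2]
  congr 1
  funext k
  simp

/-- Auxiliary permutation of ℕ × ℕ used for the "cons" lemma. -/
def consFun : ℕ × ℕ → ℕ × ℕ
  | (0, 0) => (0, 0)
  | (0, j+1) => (0, j+1)
  | (1, j) => (j+1, 0)
  | (i+2, j) => (i+1, j+1)

def consInv : ℕ × ℕ → ℕ × ℕ
  | (0, 0) => (0, 0)
  | (0, j+1) => (0, j+1)
  | (j+1, 0) => (1, j)
  | (i+1, j+1) => (i+2, j)

def consEquiv : ℕ × ℕ ≃ ℕ × ℕ where
  toFun := consFun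
  invFun := consInv
  left_inv p := by rcases p with ⟨_|_|i, _|j⟩ <;> rfl
  right_inv p := by rcases p with ⟨_|i, _|j⟩ <;> rfl

/-- The "cons" lemma: `a + Σ g = Σ (a, g 0, g 1, …)`. -/
lemma add_sum_cons (a : H) (g : ℕ → H) :
    M.add a (M.sum g) = M.sum (fun i => if i = 0 then a else g (i - 1)) := by
  set y : ℕ × ℕ → H :=
    fun p => if p.2 = 0 then (if p.1 = 0 then a else g (p.1 - 1)) else M.zero with hy
  have key := M.dsum_reindex y consEquiv
  have hrhs : (fun i => M.sum (fun j => y (i, j))) =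
      (fun i => if i = 0 then a else g (i - 1)) := by
    funext i
    have := M.a1 (fun j => y (i, j)) (by
      intro j hj
      cases j with
      | zero => exact absurd rfl hj
      | succ j => simp [hy])
    simpa [hy] using this
  have hlhs : (fun i => M.sum (fun j => y (consEquiv (i, j)))) =
      (fun i => if i = 0 then a else if i = 1 then M.sum g else M.zero) := by
    funext i
    match i with
    | 0 =>
      have := M.a1 (fun j => y (consEquiv (0, j))) (by
        intro j hj
        cases j with
        | zero => exact absurd rfl hj
        | succ j => show y (0, j+1) = M.zero; simp [hy])
      simpa [hy, consEquiv, consFun] using this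
    | 1 =>
      have : (fun j => y (consEquiv (1, j))) = g := by
        funext j
        show y (j+1, 0) = g j
        simp [hy]
      simp [this]
    | (i+2) =>
      have : (fun j => y (consEquiv (i+2, j))) = (fun _ => M.zero) := by
        funext j
        show y (i+1, j+1) = M.zero
        simp [hy]
      simp [this, M.sum_const_zero]
  rw [hrhs, hlhs] at key
  exact key

lemma nsmul_eq_sum (x : H) : ∀ m : ℕ,
    M.nsmul m x = M.sum (fun j => if j < m then x else M.zero)
  | 0 => by
    have : (fun j : ℕ => if j < 0 then x else M.zero) = (fun _ => M.zero) := by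
      funext j; simp
    rw [this, M.sum_const_zero]; rfl
  | (m+1) => by
    show M.add x (M.nsmul m x) = _
    rw [nsmul_eq_sum x m, M.add_sum_cons]
    congr 1
    funext j
    cases j with
    | zero => simp
    | succ j => simp [Nat.succ_lt_succ_iff]

/-- Countable distributivity: `Σ (fᵢ + gᵢ) = Σ f + Σ g`. -/
lemma sum_add_sum (f g : ℕ → H) :
    M.sum (fun i => M.add (f i) (g i)) = M.add (M.sum f) (M.sum g) := by
  set y : ℕ × ℕ → H :=
    fun p => if p.1 = 0 then f p.2 else if p.1 = 1 then g p.2 else M.zero with hy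
  have key := M.dsum_reindex y (Equiv.prodComm ℕ ℕ)
  have hlhs : (fun i => M.sum (fun j => y (Equiv.prodComm ℕ ℕ (i, j)))) =
      (fun i => M.add (f i) (g i)) := by
    funext i
    show M.sum (fun j => y (j, i)) = _
    rfl
  have hrhs : (fun i => M.sum (fun j => y (i, j))) =
      (fun i => if i = 0 then M.sum f else if i = 1 then M.sum g else M.zero) := by
    funext i
    match i with
    | 0 => rfl
    | 1 => rfl
    | (i+2) =>
      show M.sum (fun j => y (i+2, j)) = M.zero
      have : (fun j => y (i+2, j)) = (fun _ => M.zero) := by funext j; simp [hy]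
      rw [this, M.sum_const_zero]
  rw [hlhs, hrhs] at key
  exact key

lemma add_infMul_self (x : H) : M.add x (M.infMul x) = M.infMul x := by
  rw [infMul, M.add_sum_cons]
  congr 1
  funext i
  cases i <;> rfl

/-- The splitting equivalence `ℕ × ℕ ≃ ℕ ⊕ ℕ × ℕ` separating column 0. -/
def splitFun : ℕ × ℕ → ℕ ⊕ ℕ × ℕ
  | (i, 0) => Sum.inl i
  | (i, j+1) => Sum.inr (i, j)

def splitEquiv : ℕ × ℕ ≃ ℕ ⊕ ℕ × ℕ where
  toFun := splitFun
  invFun := fun s => match s with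
    | Sum.inl i => (i, 0)
    | Sum.inr (i, j) => (i, j+1)
  left_inv p := by rcases p with ⟨i, _|j⟩ <;> rfl
  right_inv s := by rcases s with i | ⟨i, j⟩ <;> rfl

/-- Key combinatorial fact: a countable sum of finite positive multiples of `x`
equals `ℵ₀ · x`. -/
lemma sum_nsmul_eq_infMul (x : H) (k : ℕ → ℕ) (hk : ∀ i, 1 ≤ k i) :
    M.sum (fun i => M.nsmul (k i) x) = M.infMul x := by
  classical
  set A : Set (ℕ × ℕ) := {p | p.2 < k p.1} with hA
  have hAinf : A.Infinite :=
    Set.infinite_of_injective_forall_mem (f := fun i : ℕ => (i, 0))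
      (fun a b h => by simpa using congrArg Prod.fst h)
      (fun i => hk i)
  have hBinf : (Aᶜ).Infinite :=
    Set.infinite_of_injective_forall_mem (f := fun j : ℕ => (0, k 0 + j))
      (fun a b h => by simpa using congrArg Prod.snd h)
      (fun j => by simp [hA])
  haveI : Infinite ↥A := hAinf.to_subtype
  haveI : Infinite ↥(Aᶜ) := hBinf.to_subtype
  haveI : Denumerable ↥A := Denumerable.ofEncodableOfInfinite _
  haveI : Denumerable ↥(Aᶜ) := Denumerable.ofEncodableOfInfinite _
  let eA : ℕ ≃ ↥A := (Denumerable.eqv ↥A).symm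
  let eB : ℕ × ℕ ≃ ↥(Aᶜ) := (Denumerable.eqv (ℕ × ℕ)).trans (Denumerable.eqv ↥(Aᶜ)).symm
  let φ : ℕ × ℕ ≃ ℕ × ℕ := splitEquiv.trans ((eA.sumCongr eB).trans (Equiv.Set.sumCompl A))
  have hφ0 : ∀ i, φ (i, 0) ∈ A := by
    intro i
    show (Equiv.Set.sumCompl A) ((eA.sumCongr eB) (splitEquiv (i, 0))) ∈ A
    have h1 : splitEquiv (i, 0) = Sum.inl i := rfl
    rw [h1]
    show (Equiv.Set.sumCompl A) (Sum.inl (eA i)) ∈ A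
    rw [Equiv.Set.sumCompl_apply_inl]
    exact (eA i).2
  have hφ1 : ∀ i j, φ (i, j+1) ∈ Aᶜ := by
    intro i j
    show (Equiv.Set.sumCompl A) ((eA.sumCongr eB) (splitEquiv (i, j+1))) ∈ Aᶜ
    have h1 : splitEquiv (i, j+1) = Sum.inr (i, j) := rfl
    rw [h1]
    show (Equiv.Set.sumCompl A) (Sum.inr (eB (i, j))) ∈ Aᶜ
    rw [Equiv.Set.sumCompl_apply_inr]
    exact (eB (i, j)).2
  set g : ℕ × ℕ → H := fun p => if p ∈ A then x else M.zero with hg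
  have key := M.dsum_reindex g φ
  have hlhs : (fun i => M.sum (fun j => g (φ (i, j)))) = (fun _ => x) := by
    funext i
    have := M.a1 (fun j => g (φ (i, j))) (by
      intro j hj
      cases j with
      | zero => exact absurd rfl hj
      | succ j =>
        show g (φ (i, j+1)) = M.zero
        have := hφ1 i j
        simp only [hg]
        rw [if_neg this])
    rw [this]
    show g (φ (i, 0)) = x
    simp only [hg]
    rw [if_pos (hφ0 i)]
  have hrhs : (fun i => M.sum (fun j => g (i, j))) = (fun i => M.nsmul (k i) x) := by
    funext i
    rw [M.nsmul_eq_sum]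
    rfl
  rw [hlhs, hrhs] at key
  exact key.symm

end AlephMonoid

/-- if H admits a braiding element x with H = ⟨add(x)⟩_{ℵ₀}
and ℵ₀·x = n·x for some finite n, then H = add(x). -/
theorem eq_add_of_infMul_eq_nsmul {H : Type*} (M : AlephMonoid H) (x : H)
    (hbraid : ∀ x' y' : ℕ → H, (∀ i, M.inAdd x (x' i)) → (∀ i, M.inAdd x (y' i)) →
      M.sum x' = M.sum y' →
      ∃ (m n : ℕ → ℕ) (u v : ℕ → H),
        m 0 = 0 ∧ StrictMono m ∧ StrictMono n ∧
        (∀ j, M.inAdd x (u j)) ∧ (∀ j, M.inAdd x (v j)) ∧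
        v 0 = x' 0 ∧
        M.intervalSum y' 0 (n 0) = M.add (v 0) (u 0) ∧
        (∀ j, M.intervalSum x' (m j + 1) (m (j + 1)) = M.add (u j) (v (j + 1))) ∧
        (∀ j, M.intervalSum y' (n j + 1) (n (j + 1)) = M.add (u (j + 1)) (v (j + 1))))
    (hgen : ∀ h : H, ∃ f : ℕ → H, (∀ i, M.inAdd x (f i)) ∧ h = M.sum f)
    (n : ℕ) (hn : M.infMul x = M.nsmul n x) :
    ∀ h : H, M.inAdd x h := by
  intro h
  obtain ⟨f, hf, hfe⟩ := hgen h
  choose z k hk1 hkz using hf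
  have hsucc : M.nsmul n x = M.nsmul (n + 1) x := by
    have h1 : M.nsmul (n + 1) x = M.add x (M.nsmul n x) := rfl
    rw [h1, ← hn, M.add_infMul_self, hn]
  refine ⟨M.sum z, n + 1, Nat.le_add_left 1 n, ?_⟩
  have : M.add h (M.sum z) = M.add (M.sum f) (M.sum z) := by rw [hfe]
  rw [this, ← M.sum_add_sum]
  have h2 : (fun i => M.add (f i) (z i)) = (fun i => M.nsmul (k i) x) := by
    funext i; exact hkz i
  rw [h2, M.sum_nsmul_eq_infMul x k hk1, hn, ← hsucc]
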